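/- If ω1, ω3, ω5, ω7 solve the symmetric (δ = 1) center-manifold system, then A(t) = |ω1(t)|² + |ω3(t)|² and B(t) = |ω5(t)|² + |ω7(t)|² are differentiable and satisfy the closed two-dimensional system A'(t) = −2ν A(t) + (3/(20ν)) A(t) B(t) and B'(t) = −4ν B(t) − (2/(5ν)) A(t) B(t). -/

import Mathlib

lemma hasDerivAt_sq_abs (f : ℝ → ℂ) (d : ℂ) (t : ℝ) (hf : HasDerivAt f d t) :
    HasDerivAt (fun s => ‖f s‖ ^ 2)
      (2 * ((starRingEnd ℂ) (f t) * d).re) t := by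
  have hre : HasDerivAt (fun s => (f s).re) d.re t :=
    (Complex.reCLM.hasFDerivAt.comp_hasDerivAt t hf)
  have him : HasDerivAt (fun s => (f s).im) d.im t :=
    (Complex.imCLM.hasFDerivAt.comp_hasDerivAt t hf)
  have h : HasDerivAt (fun s => (f s).re * (f s).re + (f s).im * (f s).im) _ t :=
    (hre.mul hre).add (him.mul him)
  have hfun : (fun s => ‖f s‖ ^ 2)
      = fun s => (f s).re * (f s).re + (f s).im * (f s).im := by
    funext s
    rw [← Complex.normSq_eq_norm_sq, Complex.normSq_apply]
  rw [hfun]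
  convert h using 1
  simp [Complex.mul_re]
  ring

/-- For the symmetric (δ = 1) center-manifold system,
A(t) = |ω1(t)|² + |ω3(t)|² and B(t) = |ω5(t)|² + |ω7(t)|² are differentiable and satisfy
A' = −2νA + (3/(20ν))AB and B' = −4νB − (2/(5ν))AB. -/
theorem AB_closed_system
    (ν : ℝ) (hν : 0 < ν)
    (ω1 ω3 ω5 ω7 : ℝ → ℂ)
    (h1 : ∀ t : ℝ, 0 ≤ t → HasDerivAt ω1
      (-(ν : ℂ) * ω1 t + (1 / 2 : ℂ) * (ω3 t * ω7 t - (starRingEnd ℂ) (ω3 t) * ω5 t)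
        + ((3 / (40 * ν) : ℝ) : ℂ) * ω1 t
            * ((‖ω5 t‖ ^ 2 + ‖ω7 t‖ ^ 2 : ℝ) : ℂ)) t)
    (h3 : ∀ t : ℝ, 0 ≤ t → HasDerivAt ω3
      (-(ν : ℂ) * ω3 t + (1 / 2 : ℂ) * ((starRingEnd ℂ) (ω1 t) * ω5 t - ω1 t * (starRingEnd ℂ) (ω7 t))
        + ((3 / (40 * ν) : ℝ) : ℂ) * ω3 t
            * ((‖ω5 t‖ ^ 2 + ‖ω7 t‖ ^ 2 : ℝ) : ℂ)) t)
    (h5 : ∀ t : ℝ, 0 ≤ t → HasDerivAt ω5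
      (-((2 * ν : ℝ) : ℂ) * ω5 t - ((1 / (5 * ν) : ℝ) : ℂ) * ω5 t
          * ((‖ω1 t‖ ^ 2 + ‖ω3 t‖ ^ 2 : ℝ) : ℂ)) t)
    (h7 : ∀ t : ℝ, 0 ≤ t → HasDerivAt ω7
      (-((2 * ν : ℝ) : ℂ) * ω7 t - ((1 / (5 * ν) : ℝ) : ℂ) * ω7 t
          * ((‖ω1 t‖ ^ 2 + ‖ω3 t‖ ^ 2 : ℝ) : ℂ)) t) :
    ∀ t : ℝ, 0 ≤ t →
      HasDerivAt (fun s => ‖ω1 s‖ ^ 2 + ‖ω3 s‖ ^ 2)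
        (-2 * ν * (‖ω1 t‖ ^ 2 + ‖ω3 t‖ ^ 2)
          + 3 / (20 * ν) * (‖ω1 t‖ ^ 2 + ‖ω3 t‖ ^ 2)
              * (‖ω5 t‖ ^ 2 + ‖ω7 t‖ ^ 2)) t
      ∧ HasDerivAt (fun s => ‖ω5 s‖ ^ 2 + ‖ω7 s‖ ^ 2)
        (-4 * ν * (‖ω5 t‖ ^ 2 + ‖ω7 t‖ ^ 2)
          - 2 / (5 * ν) * (‖ω1 t‖ ^ 2 + ‖ω3 t‖ ^ 2)
              * (‖ω5 t‖ ^ 2 + ‖ω7 t‖ ^ 2)) t := by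
  intro t ht
  have hν' : ν ≠ 0 := ne_of_gt hν
  have d1 := hasDerivAt_sq_abs _ _ _ (h1 t ht)
  have d3 := hasDerivAt_sq_abs _ _ _ (h3 t ht)
  have d5 := hasDerivAt_sq_abs _ _ _ (h5 t ht)
  have d7 := hasDerivAt_sq_abs _ _ _ (h7 t ht)
  constructor
  · convert (show HasDerivAt (fun s => ‖ω1 s‖ ^ 2 + ‖ω3 s‖ ^ 2) _ t from d1.add d3) using 1
    simp only [← Complex.normSq_eq_norm_sq, Complex.normSq_apply, Complex.mul_re,
      Complex.mul_im, Complex.add_re, Complex.add_im, Complex.sub_re, Complex.sub_im,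
      Complex.neg_re, Complex.neg_im, Complex.conj_re, Complex.conj_im,
      Complex.ofReal_re, Complex.ofReal_im, Complex.div_re, Complex.div_im,
      Complex.one_re, Complex.one_im, Complex.re_ofNat,
      Complex.im_ofNat]
    field_simp
    ring
  · convert (show HasDerivAt (fun s => ‖ω5 s‖ ^ 2 + ‖ω7 s‖ ^ 2) _ t from d5.add d7) using 1
    simp only [← Complex.normSq_eq_norm_sq, Complex.normSq_apply, Complex.mul_re,
      Complex.mul_im, Complex.add_re, Complex.add_im, Complex.sub_re, Complex.sub_im,
      Complex.neg_re, Complex.neg_im, Complex.conj_re, Complex.conj_im,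
      Complex.ofReal_re, Complex.ofReal_im]
    field_simp
    ring
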